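/- Let G be a finite subcubic class two graph and let R be a representative conflicting subset of G of minimal order. Then there exists a minimal colouring of G whose set of conflicting edges is exactly R. -/

import Mathlib

open SimpleGraph

variable {V : Type*}

/-- Two edges (of a graph) are adjacent if they are distinct and share a vertex. -/
def EdgesAdj (e₁ e₂ : Sym2 V) : Prop := e₁ ≠ e₂ ∧ ∃ v, v ∈ e₁ ∧ v ∈ e₂

/-- `f` is a proper edge colouring of `G`: adjacent edges of `G` get distinct colours. -/
def IsProperEC (G : SimpleGraph V) {α : Type*} (f : Sym2 V → α) : Prop :=
  ∀ e₁ ∈ G.edgeSet, ∀ e₂ ∈ G.edgeSet, EdgesAdj e₁ e₂ → f e₁ ≠ f e₂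

/-- `G` is 3-edge-colourable. -/
def ThreeEC (G : SimpleGraph V) : Prop := ∃ f : Sym2 V → Fin 3, IsProperEC G f

/-- The degree of a vertex. -/
noncomputable def deg (G : SimpleGraph V) (v : V) : ℕ := Nat.card (G.neighborSet v)

/-- Every vertex has degree at most 3. -/
def Subcubic (G : SimpleGraph V) : Prop := ∀ v, deg G v ≤ 3

/-- Every vertex has degree exactly 3. -/
def CubicGraph (G : SimpleGraph V) : Prop := ∀ v, deg G v = 3

/-- The resistance of `G`: the minimum number of edges whose removal from `G`
yields a 3-edge-colourable graph. -/
noncomputable def resistance (G : SimpleGraph V) : ℕ :=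
  sInf {n | ∃ R : Set (Sym2 V), R.ncard = n ∧ ThreeEC (G.deleteEdges R)}

/-- `M` is a minimal conflicting subgraph of `G`: a subgraph of `G` that is not
3-edge-colourable, but `M − e` is 3-edge-colourable for every edge `e` of `M`. -/
def MinConfl (G M : SimpleGraph V) : Prop :=
  M ≤ G ∧ ¬ ThreeEC M ∧ ∀ e ∈ M.edgeSet, ThreeEC (M.deleteEdges {e})

/-- `R` is a representative conflicting subset of `G`: a set of edges of `G`
containing at least one edge from every minimal conflicting subgraph of `G`. -/
def RepConfl (G : SimpleGraph V) (R : Set (Sym2 V)) : Prop :=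
  R ⊆ G.edgeSet ∧ ∀ M : SimpleGraph V, MinConfl G M → (R ∩ M.edgeSet).Nonempty

/-- A minimal colouring of `G`: a proper 4-edge-colouring (colour `0` playing the role
of the fourth colour) in which exactly `resistance G` edges of `G` receive colour `0`. -/
def IsMinimalColoring (G : SimpleGraph V) (f : Sym2 V → Fin 4) : Prop :=
  IsProperEC G f ∧ {e | e ∈ G.edgeSet ∧ f e = 0}.ncard = resistance G

section AuxiliaryLemmas


lemma edge_rep {H : SimpleGraph V} {e : Sym2 V} {y : V} (he : e ∈ H.edgeSet) (hy : y ∈ e) :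
    ∃ z, H.Adj y z ∧ e = s(y, z) := by
  induction e using Sym2.inductionOn with
  | _ a b =>
    rcases Sym2.mem_iff.mp hy with rfl | rfl
    · exact ⟨b, H.mem_edgeSet.mp he, rfl⟩
    · exact ⟨a, (H.mem_edgeSet.mp he).symm, Sym2.eq_swap⟩

lemma threeEC_mono {H H' : SimpleGraph V} (h : H ≤ H') (h3 : ThreeEC H') : ThreeEC H := by
  obtain ⟨f, hf⟩ := h3
  exact ⟨f, fun e1 he1 e2 he2 hadj =>
    hf e1 (edgeSet_mono h he1) e2 (edgeSet_mono h he2) hadj⟩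

lemma threeEC_of_no_edges {H : SimpleGraph V} (h : H.edgeSet = ∅) : ThreeEC H :=
  ⟨fun _ => 0, fun e1 he1 => by rw [h] at he1; exact absurd he1 (Set.notMem_empty e1)⟩

lemma exists_minconfl_aux [Fintype V] {G : SimpleGraph V} :
    ∀ (n : ℕ) (H : SimpleGraph V), H.edgeSet.ncard ≤ n → H ≤ G → ¬ ThreeEC H →
      ∃ M, MinConfl G M ∧ M ≤ H := by
  intro n
  induction n with
  | zero =>
    intro H hcard hle h3
    exact absurd (threeEC_of_no_edges ((Set.ncard_eq_zero (Set.toFinite _)).mp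
      (Nat.le_zero.mp hcard))) h3
  | succ n ih =>
    intro H hcard hle h3
    by_cases hall : ∀ e ∈ H.edgeSet, ThreeEC (H.deleteEdges {e})
    · exact ⟨H, ⟨hle, h3, hall⟩, le_refl H⟩
    · push_neg at hall
      obtain ⟨e, he, hne⟩ := hall
      have hlt : (H.deleteEdges {e}).edgeSet.ncard ≤ n := by
        rw [edgeSet_deleteEdges]
        have := Set.ncard_diff_singleton_lt_of_mem he (Set.toFinite _)
        have h2 : H.edgeSet \ {e} = H.edgeSet \ ({e} : Set (Sym2 V)) := rfl
        omega
      obtain ⟨M, hM, hMle⟩ := ih (H.deleteEdges {e}) hlt (le_trans (deleteEdges_le _) hle) hne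
      exact ⟨M, hM, le_trans hMle (deleteEdges_le _)⟩

lemma repConfl_threeEC [Fintype V] {G : SimpleGraph V} {R : Set (Sym2 V)} (hR : RepConfl G R) :
    ThreeEC (G.deleteEdges R) := by
  by_contra h
  obtain ⟨M, hM, hMle⟩ := exists_minconfl_aux (G.deleteEdges R).edgeSet.ncard
    (G.deleteEdges R) le_rfl (deleteEdges_le R) h
  obtain ⟨e, heR, heM⟩ := hR.2 M hM
  have : e ∈ (G.deleteEdges R).edgeSet := edgeSet_mono hMle heM
  rw [edgeSet_deleteEdges] at this
  exact this.2 heR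

lemma resistance_spec [Fintype V] (G : SimpleGraph V) :
    ∃ D : Set (Sym2 V), D ⊆ G.edgeSet ∧ D.ncard = resistance G ∧
      ThreeEC (G.deleteEdges D) := by
  have hne : {n | ∃ R : Set (Sym2 V), R.ncard = n ∧ ThreeEC (G.deleteEdges R)}.Nonempty := by
    refine ⟨G.edgeSet.ncard, G.edgeSet, rfl, threeEC_of_no_edges ?_⟩
    rw [edgeSet_deleteEdges]; simp
  obtain ⟨D, hD, h3⟩ := Nat.sInf_mem hne
  have hdel : G.deleteEdges (D ∩ G.edgeSet) = G.deleteEdges D := by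
    ext a b
    simp only [deleteEdges_adj, Set.mem_inter_iff, mem_edgeSet, not_and]
    constructor <;> (rintro ⟨h1, h2⟩; refine ⟨h1, ?_⟩) <;> tauto
  refine ⟨D ∩ G.edgeSet, Set.inter_subset_right, le_antisymm ?_ ?_, by rw [hdel]; exact h3⟩
  · calc (D ∩ G.edgeSet).ncard ≤ D.ncard := Set.ncard_le_ncard Set.inter_subset_left (Set.toFinite _)
      _ = resistance G := hD
  · exact Nat.sInf_le ⟨D ∩ G.edgeSet, rfl, by rw [hdel]; exact h3⟩

def HasCol (H : SimpleGraph V) (f : Sym2 V → Fin 3) (y : V) (a : Fin 3) : Prop :=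
  ∃ z, H.Adj y z ∧ f s(y, z) = a

lemma four_neighbors_absurd [Fintype V] {G : SimpleGraph V} (hsub : Subcubic G) {y a b c d : V}
    (hab : a ≠ b) (hac : a ≠ c) (had : a ≠ d) (hbc : b ≠ c) (hbd : b ≠ d) (hcd : c ≠ d)
    (ha : G.Adj y a) (hb : G.Adj y b) (hc : G.Adj y c) (hd : G.Adj y d) : False := by
  have h4 : ({a, b, c, d} : Set V).ncard = 4 := by
    rw [Set.ncard_insert_of_notMem (by simp [hab, hac, had]) (Set.toFinite _),
        Set.ncard_insert_of_notMem (by simp [hbc, hbd]) (Set.toFinite _),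
        Set.ncard_insert_of_notMem (by simp [hcd]) (Set.toFinite _), Set.ncard_singleton]
  have hsubn : ({a, b, c, d} : Set V) ⊆ G.neighborSet y := by
    intro z hz
    simp only [Set.mem_insert_iff, Set.mem_singleton_iff] at hz
    rcases hz with rfl | rfl | rfl | rfl <;> assumption
  have hle := Set.ncard_le_ncard hsubn (Set.toFinite _)
  have hdeg := hsub y
  rw [deg, Nat.card_coe_set_eq] at hdeg
  omega

lemma extend_coloring {G : SimpleGraph V} {R : Set (Sym2 V)} {f : Sym2 V → Fin 3}
    (hf : IsProperEC (G.deleteEdges R) f) {p q : V} {a : Fin 3}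
    (hp : ¬ HasCol (G.deleteEdges R) f p a) (hq : ¬ HasCol (G.deleteEdges R) f q a) :
    ThreeEC (G.deleteEdges (R \ {s(p, q)})) := by
  classical
  set H := G.deleteEdges R with hH
  set e0 := s(p, q) with he0
  refine ⟨fun e => if e = e0 then a else f e, ?_⟩
  have hedge : ∀ d, d ∈ (G.deleteEdges (R \ {e0})).edgeSet → d ≠ e0 → d ∈ H.edgeSet := by
    intro d hd hne
    rw [edgeSet_deleteEdges] at hd
    rw [hH, edgeSet_deleteEdges]
    exact ⟨hd.1, fun hdR => hd.2 ⟨hdR, hne⟩⟩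
  have key : ∀ d, d ∈ H.edgeSet → EdgesAdj d e0 → f d ≠ a := by
    rintro d hd ⟨hne, y, hyd, hye0⟩
    obtain ⟨z, hz, rfl⟩ := edge_rep hd hyd
    rcases Sym2.mem_iff.mp hye0 with rfl | rfl
    · exact fun h => hp ⟨z, hz, h⟩
    · exact fun h => hq ⟨z, hz, h⟩
  intro d1 hd1 d2 hd2 hadj
  by_cases h1 : d1 = e0 <;> by_cases h2 : d2 = e0
  · exact absurd (h1.trans h2.symm) hadj.1
  · simp only [if_pos h1, if_neg h2]
    subst h1
    have := key d2 (hedge d2 hd2 h2) ⟨hadj.1.symm, hadj.2.imp fun y hy => ⟨hy.2, hy.1⟩⟩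
    exact fun h => this h.symm
  · simp only [if_neg h1, if_pos h2]
    subst h2
    exact key d1 (hedge d1 hd1 h1) hadj
  · simp only [if_neg h1, if_neg h2]
    exact hf d1 (hedge d1 hd1 h1) d2 (hedge d2 hd2 h2) hadj

/-- The subgraph of `H` consisting of the edges coloured `b` or `c`. -/
@[reducible]
def KG (H : SimpleGraph V) (f : Sym2 V → Fin 3) (b c : Fin 3) : SimpleGraph V where
  Adj x y := H.Adj x y ∧ (f s(x, y) = b ∨ f s(x, y) = c)
  symm := by
    refine ⟨?_⟩
    intro x y ⟨h1, h2⟩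
    refine ⟨h1.symm, ?_⟩
    rwa [Sym2.eq_swap] at h2
  loopless := ⟨fun x h => H.loopless.irrefl x h.1⟩

lemma KG_edge_col {H : SimpleGraph V} {f : Sym2 V → Fin 3} {b c : Fin 3} {e : Sym2 V}
    (he : e ∈ (KG H f b c).edgeSet) : f e = b ∨ f e = c := by
  induction e using Sym2.inductionOn with
  | _ x y => exact ((KG H f b c).mem_edgeSet.mp he).2

lemma kempe {G : SimpleGraph V} {R : Set (Sym2 V)} {f : Sym2 V → Fin 3}
    (hf : IsProperEC (G.deleteEdges R) f) {b c : Fin 3} (hbc : b ≠ c)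
    {v w : V}
    (hwb : ¬ HasCol (G.deleteEdges R) f w b)
    (hvc : ¬ HasCol (G.deleteEdges R) f v c)
    (h3 : ¬ ThreeEC (G.deleteEdges (R \ {s(w, v)}))) :
    (KG (G.deleteEdges R) f b c).Reachable w v := by
  classical
  set H := G.deleteEdges R with hH
  set S := KG H f b c with hS
  by_contra hreach
  set P : Sym2 V → Prop := fun e => e ∈ S.edgeSet ∧ ∃ y ∈ e, S.Reachable w y with hP
  set g : Sym2 V → Fin 3 := fun e => if P e then Equiv.swap b c (f e) else f e with hg
  have hPboth : ∀ e, P e → ∀ y ∈ e, S.Reachable w y := by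
    rintro e ⟨heS, y0, hy0, hr0⟩ y hy
    obtain ⟨z, hz, rfl⟩ := edge_rep heS hy0
    rcases Sym2.mem_iff.mp hy with rfl | rfl
    · exact hr0
    · exact hr0.trans hz.reachable
  have hg_proper : IsProperEC H g := by
    intro d1 hd1 d2 hd2 hadj
    have hsymm : EdgesAdj d2 d1 := ⟨hadj.1.symm, hadj.2.imp fun y hy => ⟨hy.2, hy.1⟩⟩
    have hmain : ∀ e1, e1 ∈ H.edgeSet → ∀ e2, e2 ∈ H.edgeSet → EdgesAdj e1 e2 →
        P e1 → ¬ P e2 → g e1 ≠ g e2 := by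
      intro e1 he1 e2 he2 hadj' hP1 hP2
      have hc2 : ¬ (f e2 = b ∨ f e2 = c) := by
        intro hcol2
        obtain ⟨hne, y, hy1, hy2⟩ := hadj'
        have he2S : e2 ∈ S.edgeSet := by
          obtain ⟨z, hz, rfl⟩ := edge_rep he2 hy2
          exact S.mem_edgeSet.mpr ⟨hz, hcol2⟩
        exact hP2 ⟨he2S, y, hy2, hPboth e1 hP1 y hy1⟩
      have hc1 : f e1 = b ∨ f e1 = c := KG_edge_col hP1.1
      have hg1 : g e1 = c ∨ g e1 = b := by
        rw [hg]; simp only [if_pos hP1]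
        rcases hc1 with h | h <;> rw [h] <;> simp [Equiv.swap_apply_left, Equiv.swap_apply_right]
      rw [hg]; simp only [if_pos hP1, if_neg hP2]
      push_neg at hc2
      intro hcon
      rcases hg1 with h | h <;> rw [hg] at h <;> simp only [if_pos hP1] at h <;>
        rw [h] at hcon
      · exact hc2.2 hcon.symm
      · exact hc2.1 hcon.symm
    by_cases h1 : P d1 <;> by_cases h2 : P d2
    · rw [hg]; simp only [if_pos h1, if_pos h2]
      intro hcon
      exact hf d1 hd1 d2 hd2 hadj ((Equiv.swap b c).injective hcon)
    · exact hmain d1 hd1 d2 hd2 hadj h1 h2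
    · exact fun hcon => hmain d2 hd2 d1 hd1 hsymm h2 h1 hcon.symm
    · rw [hg]; simp only [if_neg h1, if_neg h2]
      exact hf d1 hd1 d2 hd2 hadj
  have hgw : ¬ HasCol H g w c := by
    rintro ⟨z, hz, hcol⟩
    rw [hg] at hcol
    by_cases hPe : P s(w, z)
    · simp only [if_pos hPe] at hcol
      rcases KG_edge_col hPe.1 with h | h
      · exact hwb ⟨z, hz, h⟩
      · rw [h, Equiv.swap_apply_right] at hcol; exact hbc hcol
    · simp only [if_neg hPe] at hcol
      by_cases hfb : f s(w, z) = b
      · exact hwb ⟨z, hz, hfb⟩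
      · exact hPe ⟨S.mem_edgeSet.mpr ⟨hz, Or.inr hcol⟩, w, Sym2.mem_mk_left w z,
          Reachable.refl w⟩
  have hgv : ¬ HasCol H g v c := by
    rintro ⟨z, hz, hcol⟩
    have hnP : ¬ P s(v, z) := fun hp =>
      hreach (hPboth _ hp v (Sym2.mem_mk_left v z))
    rw [hg] at hcol; simp only [if_neg hnP] at hcol
    exact hvc ⟨z, hz, hcol⟩
  exact h3 (extend_coloring hg_proper hgw hgv)

lemma walk_snd {S : SimpleGraph V} {y v : V} (d : S.Walk y v) (h : y ≠ v) :
    ∃ n, S.Adj y n ∧ n ∈ d.support.tail := by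
  cases d with
  | nil => exact absurd rfl h
  | cons h' q =>
    exact ⟨_, h', by rw [Walk.support_cons]; exact q.start_mem_support⟩

lemma path_mid_two_nbrs [DecidableEq V] {S : SimpleGraph V} {u v y : V} (p : S.Walk u v)
    (hp : p.IsPath) (hy : y ∈ p.support) (hyu : y ≠ u) (hyv : y ≠ v) :
    ∃ n1 ∈ p.support, ∃ n2 ∈ p.support, n1 ≠ n2 ∧ S.Adj y n1 ∧ S.Adj y n2 := by
  obtain ⟨n2, hn2adj, hn2mem⟩ := walk_snd (p.dropUntil y hy) hyv
  obtain ⟨n1, hn1adj, hn1mem⟩ := walk_snd (p.takeUntil y hy).reverse hyu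
  have hn1t : n1 ∈ (p.takeUntil y hy).support := by
    have := List.mem_of_mem_tail hn1mem
    rwa [Walk.support_reverse, List.mem_reverse] at this
  have hnodup : ((p.takeUntil y hy).support ++ (p.dropUntil y hy).support.tail).Nodup := by
    have := hp.support_nodup
    rwa [← p.take_spec hy, Walk.support_append] at this
  have hdisj := (List.nodup_append.mp hnodup).2.2
  refine ⟨n1, p.support_takeUntil_subset hy hn1t, n2,
    p.support_dropUntil_subset hy (List.mem_of_mem_tail hn2mem), ?_, hn1adj, hn2adj⟩
  intro hcon
  exact hdisj _ hn1t _ hn2mem hcon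

lemma path_closure [DecidableEq V] {S : SimpleGraph V} {u v : V} (huv : u ≠ v)
    (p : S.Walk u v) (hp : p.IsPath)
    (hdeg : ∀ y z1 z2 z3, S.Adj y z1 → S.Adj y z2 → S.Adj y z3 → z1 = z2 ∨ z1 = z3 ∨ z2 = z3)
    (hu : ∀ z1 z2, S.Adj u z1 → S.Adj u z2 → z1 = z2)
    (hv : ∀ z1 z2, S.Adj v z1 → S.Adj v z2 → z1 = z2) :
    ∀ y ∈ p.support, ∀ z, S.Adj y z → z ∈ p.support := by
  intro y hy z hz
  by_cases hyu : y = u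
  · subst hyu
    obtain ⟨n, hn, hnmem⟩ := walk_snd p huv
    rw [hu z n hz hn]
    exact List.mem_of_mem_tail hnmem
  by_cases hyv : y = v
  · subst hyv
    obtain ⟨n, hn, hnmem⟩ := walk_snd p.reverse (Ne.symm huv)
    rw [hv z n hz hn]
    have := List.mem_of_mem_tail hnmem
    rwa [Walk.support_reverse, List.mem_reverse] at this
  · obtain ⟨n1, hm1, n2, hm2, hne, ha1, ha2⟩ := path_mid_two_nbrs p hp hy hyu hyv
    rcases hdeg y z n1 n2 hz ha1 ha2 with rfl | rfl | h
    · exact hm1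
    · exact hm2
    · exact absurd h hne

lemma reach_support {S : SimpleGraph V} {u v : V} (p : S.Walk u v)
    (hcl : ∀ y ∈ p.support, ∀ z, S.Adj y z → z ∈ p.support) :
    ∀ {a b : V} (_ : S.Walk a b), a ∈ p.support → b ∈ p.support := by
  intro a b q
  induction q with
  | nil => exact id
  | cons h q ih => exact fun ha => ih (hcl _ ha _ h)

lemma three_leaves_absurd {S : SimpleGraph V} {u v w : V}
    (huv : u ≠ v) (hwv : w ≠ v) (huw : u ≠ w)
    (hdeg : ∀ y z1 z2 z3, S.Adj y z1 → S.Adj y z2 → S.Adj y z3 → z1 = z2 ∨ z1 = z3 ∨ z2 = z3)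
    (hu : ∀ z1 z2, S.Adj u z1 → S.Adj u z2 → z1 = z2)
    (hv : ∀ z1 z2, S.Adj v z1 → S.Adj v z2 → z1 = z2)
    (hw : ∀ z1 z2, S.Adj w z1 → S.Adj w z2 → z1 = z2)
    (h1 : S.Reachable u v) (h2 : S.Reachable w v) : False := by
  classical
  obtain ⟨p0⟩ := h1
  obtain ⟨p, hp⟩ := p0.toPath
  have hcl := path_closure huv p hp hdeg hu hv
  obtain ⟨q⟩ := h2.symm
  have hwsup : w ∈ p.support := reach_support p hcl q p.end_mem_support
  obtain ⟨n1, _, n2, _, hne, ha1, ha2⟩ := path_mid_two_nbrs p hp hwsup (Ne.symm huw) hwv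
  exact hne (hw _ _ ha1 ha2)

lemma matching_of_min [Fintype V] {G : SimpleGraph V} (hsub : Subcubic G) {R : Set (Sym2 V)}
    (hRsub : R ⊆ G.edgeSet) (h3 : ThreeEC (G.deleteEdges R))
    (hmind : ∀ e ∈ R, ¬ ThreeEC (G.deleteEdges (R \ {e})))
    {e1 e2 : Sym2 V} (he1 : e1 ∈ R) (he2 : e2 ∈ R) (hadj : EdgesAdj e1 e2) : False := by
  classical
  obtain ⟨hne, v, hv1, hv2⟩ := hadj
  obtain ⟨u, hu, rfl⟩ := edge_rep (hRsub he1) hv1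
  obtain ⟨w, hw, rfl⟩ := edge_rep (hRsub he2) hv2
  have huw : u ≠ w := fun h => hne (by rw [h])
  set H := G.deleteEdges R with hH
  obtain ⟨f, hf⟩ := h3
  have hHG : ∀ {x y : V}, H.Adj x y → G.Adj x y := fun h => (deleteEdges_adj.mp h).1
  have hnR : ∀ {x y : V}, H.Adj x y → s(x, y) ∉ R := fun h => (deleteEdges_adj.mp h).2
  -- at most one colour present at v
  have hvmax : ∀ a a', HasCol H f v a → HasCol H f v a' → a = a' := by
    rintro a a' ⟨z, hz, hfz⟩ ⟨z', hz', hfz'⟩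
    by_contra hne'
    have hzz' : z ≠ z' := fun h => hne' (by rw [← hfz, ← hfz', h])
    have hzu : z ≠ u := fun h => hnR hz (h ▸ he1)
    have hzw : z ≠ w := fun h => hnR hz (h ▸ he2)
    have hz'u : z' ≠ u := fun h => hnR hz' (h ▸ he1)
    have hz'w : z' ≠ w := fun h => hnR hz' (h ▸ he2)
    exact four_neighbors_absurd hsub hzz' hzu hzw hz'u hz'w huw
      (hHG hz) (hHG hz') hu hw
  -- some colour missing at w
  have hwmiss : ∃ a, ¬ HasCol H f w a := by
    by_contra h
    push_neg at h
    obtain ⟨z0, hz0, hc0⟩ := h 0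
    obtain ⟨z1, hz1, hc1⟩ := h 1
    obtain ⟨z2, hz2, hc2⟩ := h 2
    have d01 : z0 ≠ z1 := fun h' => by rw [h', hc1] at hc0; exact absurd hc0 (by decide)
    have d02 : z0 ≠ z2 := fun h' => by rw [h', hc2] at hc0; exact absurd hc0 (by decide)
    have d12 : z1 ≠ z2 := fun h' => by rw [h', hc2] at hc1; exact absurd hc1 (by decide)
    have hvne : ∀ {z : V}, H.Adj w z → z ≠ v := fun hz h' =>
      hnR hz (h' ▸ (Sym2.eq_swap ▸ he2 : s(w, v) ∈ R))
    exact four_neighbors_absurd hsub d01 d02 (hvne hz0) d12 (hvne hz1) (hvne hz2)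
      (hHG hz0) (hHG hz1) (hHG hz2) hw.symm
  -- some colour missing at u
  have humiss : ∃ a, ¬ HasCol H f u a := by
    by_contra h
    push_neg at h
    obtain ⟨z0, hz0, hc0⟩ := h 0
    obtain ⟨z1, hz1, hc1⟩ := h 1
    obtain ⟨z2, hz2, hc2⟩ := h 2
    have d01 : z0 ≠ z1 := fun h' => by rw [h', hc1] at hc0; exact absurd hc0 (by decide)
    have d02 : z0 ≠ z2 := fun h' => by rw [h', hc2] at hc0; exact absurd hc0 (by decide)
    have d12 : z1 ≠ z2 := fun h' => by rw [h', hc2] at hc1; exact absurd hc1 (by decide)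
    have hvne : ∀ {z : V}, H.Adj u z → z ≠ v := fun hz h' =>
      hnR hz (h' ▸ (Sym2.eq_swap ▸ he1 : s(u, v) ∈ R))
    exact four_neighbors_absurd hsub d01 d02 (hvne hz0) d12 (hvne hz1) (hvne hz2)
      (hHG hz0) (hHG hz1) (hHG hz2) hu.symm
  -- no colour is missing simultaneously at v and w, resp. at v and u
  have hvw : ∀ a, ¬ HasCol H f v a → HasCol H f w a := by
    intro a hva
    by_contra hwa
    exact hmind _ he2 (extend_coloring hf hva hwa)
  have hvu : ∀ a, ¬ HasCol H f v a → HasCol H f u a := by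
    intro a hva
    by_contra hua
    exact hmind _ he1 (extend_coloring hf hva hua)
  -- the colour b present at v
  obtain ⟨b, hb_w⟩ := hwmiss
  have hb_v : HasCol H f v b := by
    by_contra h; exact hb_w (hvw b h)
  have hb_u : ¬ HasCol H f u b := by
    obtain ⟨β, hβ⟩ := humiss
    have hβv : HasCol H f v β := by
      by_contra h; exact hβ (hvu β h)
    rwa [hvmax β b hβv hb_v] at hβ
  have hv_only : ∀ a, a ≠ b → ¬ HasCol H f v a := fun a hab h => hab (hvmax a b h hb_v)
  -- pick a second colour c
  obtain ⟨c, hcb⟩ := exists_ne b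
  set S := KG H f b c with hS
  have same_col_eq : ∀ {y z z' : V}, H.Adj y z → H.Adj y z' →
      f s(y, z) = f s(y, z') → z = z' := by
    intro y z z' hz hz' hcol
    by_contra hne''
    exact hf _ (H.mem_edgeSet.mpr hz) _ (H.mem_edgeSet.mpr hz')
      ⟨fun h => hne'' (Sym2.congr_right.mp h), y, Sym2.mem_mk_left y z,
        Sym2.mem_mk_left y z'⟩ hcol
  have hSdeg : ∀ y z1 z2 z3, S.Adj y z1 → S.Adj y z2 → S.Adj y z3 →
      z1 = z2 ∨ z1 = z3 ∨ z2 = z3 := by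
    intro y z1 z2 z3 h1 h2 h3'
    rcases h1.2 with c1 | c1 <;> rcases h2.2 with c2 | c2 <;> rcases h3'.2 with c3 | c3 <;>
      first
        | exact Or.inl (same_col_eq h1.1 h2.1 (c1.trans c2.symm))
        | exact Or.inr (Or.inl (same_col_eq h1.1 h3'.1 (c1.trans c3.symm)))
        | exact Or.inr (Or.inr (same_col_eq h2.1 h3'.1 (c2.trans c3.symm)))
  have hSv : ∀ z1 z2, S.Adj v z1 → S.Adj v z2 → z1 = z2 := by
    intro z1 z2 h1 h2
    have hcol : ∀ {z : V}, S.Adj v z → f s(v, z) = b := by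
      intro z hz
      rcases hz.2 with h | h
      · exact h
      · exact absurd ⟨z, hz.1, h⟩ (hv_only c hcb)
    exact same_col_eq h1.1 h2.1 (by rw [hcol h1, hcol h2])
  have hSother : ∀ {y : V}, ¬ HasCol H f y b →
      ∀ z1 z2, S.Adj y z1 → S.Adj y z2 → z1 = z2 := by
    intro y hyb z1 z2 h1 h2
    have hcol : ∀ {z : V}, S.Adj y z → f s(y, z) = c := by
      intro z hz
      rcases hz.2 with h | h
      · exact absurd ⟨z, hz.1, h⟩ hyb
      · exact h
    exact same_col_eq h1.1 h2.1 (by rw [hcol h1, hcol h2])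
  -- Kempe chains from w and u must reach v
  have hreach_w : S.Reachable w v :=
    kempe hf (Ne.symm hcb) hb_w (hv_only c hcb)
      (by rw [show s(w, v) = s(v, w) from Sym2.eq_swap]; exact hmind _ he2)
  have hreach_u : S.Reachable u v :=
    kempe hf (Ne.symm hcb) hb_u (hv_only c hcb)
      (by rw [show s(u, v) = s(v, u) from Sym2.eq_swap]; exact hmind _ he1)
  exact three_leaves_absurd hu.ne' hw.ne' huw hSdeg (hSother hb_u) hSv (hSother hb_w)
    hreach_u hreach_w

end AuxiliaryLemmas

/-- Every representative conflicting subset of minimal order of a finite subcubic class two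
graph is the set of conflicting edges of some minimal colouring. -/
theorem stmt_8 {V : Type*} [Fintype V] (G : SimpleGraph V)
    (hsub : Subcubic G) (hclass2 : ¬ ThreeEC G)
    (R : Set (Sym2 V)) (hR : RepConfl G R)
    (hmin : ∀ R' : Set (Sym2 V), RepConfl G R' → R.ncard ≤ R'.ncard) :
    ∃ f : Sym2 V → Fin 4, IsMinimalColoring G f ∧ {e | e ∈ G.edgeSet ∧ f e = 0} = R := by
  classical
  have hRdel : ThreeEC (G.deleteEdges R) := repConfl_threeEC hR
  have hres_le : resistance G ≤ R.ncard := Nat.sInf_le ⟨R, rfl, hRdel⟩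
  obtain ⟨D, hDsub, hDcard, hD3⟩ := resistance_spec G
  have hDrep : RepConfl G D := by
    refine ⟨hDsub, fun M hM => ?_⟩
    by_contra hemp
    rw [Set.not_nonempty_iff_eq_empty] at hemp
    have hMle : M ≤ G.deleteEdges D := by
      intro a b hab
      rw [deleteEdges_adj]
      refine ⟨hM.1 hab, fun hD' => ?_⟩
      have : s(a, b) ∈ D ∩ M.edgeSet := ⟨hD', M.mem_edgeSet.mpr hab⟩
      rw [hemp] at this
      exact this
    exact hM.2.1 (threeEC_mono hMle hD3)
  have hcard : R.ncard = resistance G :=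
    le_antisymm (hDcard ▸ hmin D hDrep) hres_le
  have hmind : ∀ e ∈ R, ¬ ThreeEC (G.deleteEdges (R \ {e})) := by
    intro e he h3'
    have h1 : resistance G ≤ (R \ {e}).ncard := Nat.sInf_le ⟨_, rfl, h3'⟩
    have h2 := Set.ncard_diff_singleton_lt_of_mem he (Set.toFinite R)
    omega
  obtain ⟨f3, hf3⟩ := hRdel
  set f : Sym2 V → Fin 4 := fun e => if e ∈ R then 0 else (f3 e).succ with hfdef
  have hset : {e | e ∈ G.edgeSet ∧ f e = 0} = R := by
    ext e
    constructor
    · rintro ⟨heG, hf0⟩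
      by_contra heR
      rw [hfdef] at hf0
      simp only [if_neg heR] at hf0
      exact Fin.succ_ne_zero _ hf0
    · intro heR
      refine ⟨hR.1 heR, ?_⟩
      rw [hfdef]; simp only [if_pos heR]
  refine ⟨f, ⟨?_, by rw [hset]; exact hcard⟩, hset⟩
  intro d1 hd1 d2 hd2 hadj
  by_cases h1 : d1 ∈ R <;> by_cases h2 : d2 ∈ R
  · exact (matching_of_min hsub hR.1 ⟨f3, hf3⟩ hmind h1 h2 hadj).elim
  · rw [hfdef]; simp only [if_pos h1, if_neg h2]
    exact fun h => Fin.succ_ne_zero _ h.symm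
  · rw [hfdef]; simp only [if_neg h1, if_pos h2]
    exact Fin.succ_ne_zero _
  · rw [hfdef]; simp only [if_neg h1, if_neg h2]
    have hd1H : d1 ∈ (G.deleteEdges R).edgeSet := by
      rw [edgeSet_deleteEdges]; exact ⟨hd1, h1⟩
    have hd2H : d2 ∈ (G.deleteEdges R).edgeSet := by
      rw [edgeSet_deleteEdges]; exact ⟨hd2, h2⟩
    exact fun h => hf3 d1 hd1H d2 hd2H hadj (Fin.succ_injective 3 h)
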